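/- If A is a stable n×n complex matrix and B an n×p complex matrix, then the Stein equation X = A X A* + B B* has a unique solution X, and this solution is positive semidefinite. -/

import Mathlib

open Matrix
open scoped ComplexOrder

open Filter
open scoped Topology ENNReal NNReal

attribute [local instance] Matrix.linftyOpNormedRing Matrix.linftyOpNormedAlgebra

lemma norm_pow_tendsto {n : ℕ} (A : Matrix (Fin n) (Fin n) ℂ)
    (hA : ∀ μ ∈ spectrum ℂ A, ‖μ‖ < 1) :
    Tendsto (fun k : ℕ => ‖A ^ k‖) atTop (𝓝 0) := by
  rcases Nat.eq_zero_or_pos n with hn | hn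
  · subst hn
    have : ∀ k : ℕ, A ^ k = 0 := fun k => Subsingleton.elim _ _
    simp [this]
  · haveI : Nonempty (Fin n) := ⟨⟨0, hn⟩⟩
    haveI : CompleteSpace (Matrix (Fin n) (Fin n) ℂ) := FiniteDimensional.complete ℂ _
    have hρ : spectralRadius ℂ A < 1 := by
      have := spectrum.spectralRadius_lt_of_forall_lt A (r := 1) ?_
      · simpa using this
      · intro z hz
        have := hA z hz
        simpa [← norm_toNNReal, ← NNReal.coe_lt_coe] using this
    obtain ⟨c, hc1, hc2⟩ := ENNReal.lt_iff_exists_nnreal_btwn.mp hρ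
    have hgel := spectrum.pow_nnnorm_pow_one_div_tendsto_nhds_spectralRadius A
    have hev : ∀ᶠ k : ℕ in atTop, (‖A ^ k‖₊ : ℝ≥0∞) ^ (1 / (k : ℝ)) < (c : ℝ≥0∞) :=
      hgel.eventually_lt_const hc1
    have hc2' : (c : ℝ) < 1 := by exact_mod_cast hc2
    have hbound : ∀ᶠ k : ℕ in atTop, ‖A ^ k‖ ≤ (c : ℝ) ^ k := by
      filter_upwards [hev, eventually_ge_atTop 1] with k hk hk1
      have hkne : (k : ℝ) ≠ 0 := by positivity
      have h2 : ((‖A ^ k‖₊ : ℝ≥0∞) ^ (1 / (k : ℝ))) ^ (k : ℝ) < (c : ℝ≥0∞) ^ (k : ℝ) :=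
        ENNReal.rpow_lt_rpow hk (by positivity)
      rw [← ENNReal.rpow_mul, one_div, inv_mul_cancel₀ hkne, ENNReal.rpow_one,
        ENNReal.rpow_natCast] at h2
      have h3 : ‖A ^ k‖₊ < c ^ k := by
        rw [← ENNReal.coe_pow] at h2
        exact_mod_cast h2
      have : ‖A ^ k‖ ≤ ((c ^ k : ℝ≥0) : ℝ) := by exact_mod_cast h3.le
      simpa [NNReal.coe_pow] using this
    exact squeeze_zero_norm' (by filter_upwards [hbound] with k hk; simpa using hk)
      (tendsto_pow_atTop_nhds_zero_of_lt_one c.coe_nonneg hc2')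

lemma spec_ct {n : ℕ} (A : Matrix (Fin n) (Fin n) ℂ)
    (hA : ∀ μ ∈ spectrum ℂ A, ‖μ‖ < 1) : ∀ μ ∈ spectrum ℂ Aᴴ, ‖μ‖ < 1 := by
  intro μ hμ
  have hmem : star μ ∈ spectrum ℂ A := by
    rw [spectrum.mem_iff] at hμ ⊢
    intro h
    apply hμ
    have h2 := (Matrix.isUnit_conjTranspose (A := algebraMap ℂ _ (star μ) - A)).mpr h
    convert h2 using 1
    simp [Algebra.algebraMap_eq_smul_one, conjTranspose_smul, conjTranspose_sub]
  simpa using hA _ hmem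

lemma stein_zero {n : ℕ} (A : Matrix (Fin n) (Fin n) ℂ)
    (hA : ∀ μ ∈ spectrum ℂ A, ‖μ‖ < 1) (D : Matrix (Fin n) (Fin n) ℂ)
    (hD : D = A * D * Aᴴ) : D = 0 := by
  have h1 := norm_pow_tendsto A hA
  have h2 := norm_pow_tendsto Aᴴ (spec_ct A hA)
  have hiter : ∀ k : ℕ, D = A ^ k * D * (Aᴴ) ^ k := by
    intro k
    induction k with
    | zero => simp
    | succ k ih =>
      calc D = A * D * Aᴴ := hD
        _ = A * (A ^ k * D * Aᴴ ^ k) * Aᴴ := by rw [← ih]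
        _ = A ^ (k + 1) * D * Aᴴ ^ (k + 1) := by
            rw [pow_succ', pow_succ]; noncomm_ring
  have hb : ∀ k : ℕ, ‖D‖ ≤ ‖A ^ k‖ * ‖D‖ * ‖Aᴴ ^ k‖ := by
    intro k
    calc ‖D‖ = ‖A ^ k * D * Aᴴ ^ k‖ := by rw [← hiter k]
      _ ≤ ‖A ^ k * D‖ * ‖Aᴴ ^ k‖ := norm_mul_le _ _
      _ ≤ ‖A ^ k‖ * ‖D‖ * ‖Aᴴ ^ k‖ :=
          mul_le_mul_of_nonneg_right (norm_mul_le _ _) (norm_nonneg _)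
  have ht : Tendsto (fun k : ℕ => ‖A ^ k‖ * ‖D‖ * ‖Aᴴ ^ k‖) atTop (𝓝 0) := by
    have := (h1.mul_const ‖D‖).mul h2
    simpa using this
  have : ‖D‖ ≤ 0 := ge_of_tendsto ht (Filter.Eventually.of_forall hb)
  simpa using norm_le_zero_iff.mp this

/-- If `A` is a stable `n×n` complex matrix and `B` an `n×p` complex matrix, then the Stein
equation `X = A X Aᴴ + B Bᴴ` has a unique solution, and this solution is positive
semidefinite. -/
theorem stmt1 {n p : ℕ} (A : Matrix (Fin n) (Fin n) ℂ) (B : Matrix (Fin n) (Fin p) ℂ)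
    (hA : ∀ μ ∈ spectrum ℂ A, ‖μ‖ < 1) :
    (∃! X : Matrix (Fin n) (Fin n) ℂ, X = A * X * Aᴴ + B * Bᴴ) ∧
      (∀ X : Matrix (Fin n) (Fin n) ℂ, X = A * X * Aᴴ + B * Bᴴ → X.PosSemidef) := by
  -- uniqueness of solutions
  have huniq : ∀ X Y : Matrix (Fin n) (Fin n) ℂ, X = A * X * Aᴴ + B * Bᴴ →
      Y = A * Y * Aᴴ + B * Bᴴ → X = Y := by
    intro X Y hX hY
    have : X - Y = A * (X - Y) * Aᴴ := by
      rw [mul_sub, sub_mul]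
      calc X - Y = (A * X * Aᴴ + B * Bᴴ) - (A * Y * Aᴴ + B * Bᴴ) := by rw [← hX, ← hY]
        _ = A * X * Aᴴ - A * Y * Aᴴ := by abel
    have := stein_zero A hA _ this
    linear_combination (norm := noncomm_ring) this
  -- existence via finite-dimensional injective-implies-surjective
  have hexists : ∃ X : Matrix (Fin n) (Fin n) ℂ, X = A * X * Aᴴ + B * Bᴴ := by
    let L : Matrix (Fin n) (Fin n) ℂ →ₗ[ℂ] Matrix (Fin n) (Fin n) ℂ :=
      { toFun := fun X => X - A * X * Aᴴ
        map_add' := by intro X Y; noncomm_ring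
        map_smul' := by intro c X; simp [Matrix.smul_mul, Matrix.mul_smul, smul_sub] }
    have hinj : Function.Injective L := by
      rw [← LinearMap.ker_eq_bot, LinearMap.ker_eq_bot']
      intro X hX
      apply stein_zero A hA
      have : X - A * X * Aᴴ = 0 := hX
      exact sub_eq_zero.mp this
    obtain ⟨X, hX⟩ := (LinearMap.injective_iff_surjective.mp hinj) (B * Bᴴ)
    exact ⟨X, by rw [← hX]; simp [L]⟩
  refine ⟨⟨hexists.choose, hexists.choose_spec, fun Y hY => huniq Y _ hY hexists.choose_spec⟩, ?_⟩
  -- positive semidefiniteness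
  intro X hX
  have hherm : X.IsHermitian := by
    have hXH : Xᴴ = A * Xᴴ * Aᴴ + B * Bᴴ := by
      conv_lhs => rw [hX]
      simp only [conjTranspose_add, conjTranspose_mul, conjTranspose_conjTranspose, mul_assoc]
    exact huniq Xᴴ X hXH hX
  -- expansion X = S k + A^k X (Aᴴ)^k
  set S : ℕ → Matrix (Fin n) (Fin n) ℂ :=
    fun k => ∑ j ∈ Finset.range k, A ^ j * (B * Bᴴ) * (Aᴴ) ^ j with hS
  have hexp : ∀ k : ℕ, X = S k + A ^ k * X * Aᴴ ^ k := by
    intro k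
    induction k with
    | zero => simp [hS]
    | succ k ih =>
      have : A ^ k * X * Aᴴ ^ k
          = A ^ (k + 1) * X * Aᴴ ^ (k + 1) + A ^ k * (B * Bᴴ) * Aᴴ ^ k := by
        conv_lhs => rw [hX]
        rw [pow_succ, pow_succ']
        noncomm_ring
      simp only [hS, Finset.sum_range_succ]
      calc X = S k + A ^ k * X * Aᴴ ^ k := ih
        _ = S k + (A ^ (k + 1) * X * Aᴴ ^ (k + 1) + A ^ k * (B * Bᴴ) * Aᴴ ^ k) := by rw [this]
        _ = _ := by abel
  have hSpsd : ∀ k, (S k).PosSemidef := by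
    intro k
    induction k with
    | zero => simpa [hS] using Matrix.PosSemidef.zero
    | succ k ih =>
      simp only [hS, Finset.sum_range_succ]
      refine ih.add ?_
      have : A ^ k * (B * Bᴴ) * Aᴴ ^ k = (A ^ k * B) * (A ^ k * B)ᴴ := by
        rw [conjTranspose_mul, conjTranspose_pow]
        simp only [Matrix.mul_assoc]
      rw [this]
      exact Matrix.posSemidef_self_mul_conjTranspose _
  refine Matrix.PosSemidef.of_dotProduct_mulVec_nonneg hherm fun x => ?_
  -- the tail tends to zero
  have h1 := norm_pow_tendsto A hA
  have h2 := norm_pow_tendsto Aᴴ (spec_ct A hA)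
  set q : Matrix (Fin n) (Fin n) ℂ → ℂ := fun M => dotProduct (star x) (M *ᵥ x) with hq
  have hqbound : ∀ M : Matrix (Fin n) (Fin n) ℂ,
      ‖q M‖ ≤ (∑ i, ‖x i‖) * (‖M‖ * ‖x‖) := by
    intro M
    rw [hq]
    calc ‖dotProduct (star x) (M *ᵥ x)‖ ≤ ∑ i, ‖star x i * (M *ᵥ x) i‖ := norm_sum_le _ _
      _ ≤ ∑ i, ‖x i‖ * ‖M *ᵥ x‖ := by
          refine Finset.sum_le_sum fun i _ => ?_
          simp only [Pi.star_apply, norm_mul, norm_star]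
          exact mul_le_mul_of_nonneg_left (norm_le_pi_norm (M *ᵥ x) i) (norm_nonneg _)
      _ = (∑ i, ‖x i‖) * ‖M *ᵥ x‖ := by rw [Finset.sum_mul]
      _ ≤ (∑ i, ‖x i‖) * (‖M‖ * ‖x‖) := by
          refine mul_le_mul_of_nonneg_left (Matrix.linfty_opNorm_mulVec _ _) ?_
          positivity
  have htail : Tendsto (fun k : ℕ => q (A ^ k * X * Aᴴ ^ k)) atTop (𝓝 0) := by
    rw [tendsto_zero_iff_norm_tendsto_zero]
    have hle : ∀ k : ℕ, ‖q (A ^ k * X * Aᴴ ^ k)‖ ≤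
        (∑ i, ‖x i‖) * (‖A ^ k‖ * ‖X‖ * ‖Aᴴ ^ k‖ * ‖x‖) := by
      intro k
      refine (hqbound _).trans ?_
      have hM : ‖A ^ k * X * Aᴴ ^ k‖ ≤ ‖A ^ k‖ * ‖X‖ * ‖Aᴴ ^ k‖ :=
        (norm_mul_le _ _).trans
          (mul_le_mul_of_nonneg_right (norm_mul_le _ _) (norm_nonneg _))
      have := mul_le_mul_of_nonneg_right hM (norm_nonneg x)
      exact mul_le_mul_of_nonneg_left this (by positivity)
    refine squeeze_zero (fun k => norm_nonneg _) hle ?_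
    have := ((((h1.mul_const ‖X‖).mul h2).mul_const ‖x‖).const_mul (∑ i, ‖x i‖))
    simpa using this
  have hqsum : Tendsto (fun k : ℕ => q (S k)) atTop (𝓝 (q X)) := by
    have heq : ∀ k : ℕ, q (S k) = q X - q (A ^ k * X * Aᴴ ^ k) := by
      intro k
      have h5 : q X = q (S k) + q (A ^ k * X * Aᴴ ^ k) := by
        conv_lhs => rw [hexp k]
        simp [hq, Matrix.add_mulVec, dotProduct_add]
      rw [h5]; ring
    simp_rw [heq]
    simpa using tendsto_const_nhds.sub htail
  have hnn : ∀ k : ℕ, (0 : ℂ) ≤ q (S k) := fun k => (hSpsd k).dotProduct_mulVec_nonneg x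
  exact ge_of_tendsto hqsum (Filter.Eventually.of_forall hnn)
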